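/- If R: V → G is a relative Rota-Baxter operator of weight 0 and (V,*) its descendent group, then the map L: (V,*) → Aut(V,+) given by L(u)v = Φ(R(u))v is a group action, and in particular L(u)⁻¹ = L(u†) where u† = −Φ(R(u)⁻¹)u is the *-inverse of u. -/

import Mathlib

/-- The multiplicative group structure that `AddAut A` carried in the older Mathlib
(`g * h = h.trans g`, `1 = refl`, `g⁻¹ = g.symm`); Mathlib now makes `AddAut A` an additive group. -/
instance AddAut.instGroupOld (A : Type*) [Add A] : Group (AddAut A) where
  mul g h := AddEquiv.trans h g
  one := AddEquiv.refl _
  inv := AddEquiv.symm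
  mul_assoc _ _ _ := rfl
  one_mul _ := rfl
  mul_one _ := rfl
  inv_mul_cancel := AddEquiv.self_trans_symm

theorem rrb_left_mult_action {G V : Type*} [Group G] [AddCommGroup V]
    (Φ : G →* AddAut V) (R : V → G)
    (hR : ∀ u v : V, R u * R v = R (u + Φ (R u) v)) :
    (∀ w : V, Φ (R 0) w = w) ∧
    (∀ u v w : V, Φ (R (u + Φ (R u) v)) w = Φ (R u) (Φ (R v) w)) ∧
    (∀ u : V, (Φ (R u))⁻¹ = Φ (R (-(Φ ((R u)⁻¹) u)))) := by
  have h0 : R 0 = 1 := by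
    have := hR 0 0
    simp at this
    exact this
  refine ⟨?_, ?_, ?_⟩
  · intro w; rw [h0]; simp; rfl
  · intro u v w
    rw [← hR]
    simp
    rfl
  · intro u
    have key : u + Φ (R u) (-(Φ ((R u)⁻¹) u)) = 0 := by
      simp
      exact add_neg_eq_zero.mpr ((Φ (R u)).apply_symm_apply u).symm
    have h1 : R u * R (-(Φ ((R u)⁻¹) u)) = 1 := by
      rw [hR, key, h0]
    have : R (-(Φ ((R u)⁻¹) u)) = (R u)⁻¹ := eq_inv_of_mul_eq_one_right h1
    rw [this]
    simp
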